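/- arXiv:2103.08532 — 3 statements merged into one kernel-verified Lean document; each statement's English description precedes it below -/
import Mathlib

section
/- The Uhlmann fidelity is multiplicative under tensor products: for positive semidefinite operators A, A' on H and B, B' on K, F(A ⊗ B, A' ⊗ B') = F(A,A') · F(B,B'), where F(X,Y) = tr √(√X Y √X). -/
open Matrix Kronecker ComplexOrder Filter

open Classical in
/-- Square root of a positive semidefinite matrix (junk value `0` otherwise). -/
noncomputable def matSqrt {n : Type*} [Fintype n] [DecidableEq n]
    (A : Matrix n n ℂ) : Matrix n n ℂ :=
  if h : A.PosSemidef then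
    h.1.eigenvectorUnitary.1 * diagonal ((↑) ∘ (√·) ∘ h.1.eigenvalues) *
      (star h.1.eigenvectorUnitary : Matrix n n ℂ)
  else 0

/-- Uhlmann fidelity F(A,B) = tr sqrt( sqrt A * B * sqrt A ). -/
noncomputable def fid {n : Type*} [Fintype n] [DecidableEq n]
    (A B : Matrix n n ℂ) : ℝ :=
  ((matSqrt (matSqrt A * B * matSqrt A)).trace).re

namespace Matrix.PosSemidef

open scoped MatrixOrder

/-- Square root of a positive semidefinite matrix via its eigendecomposition. -/
noncomputable def sqrt {n : Type*} [Fintype n] [DecidableEq n]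
    {A : Matrix n n ℂ} (hA : A.PosSemidef) : Matrix n n ℂ :=
  hA.1.eigenvectorUnitary.1 * diagonal ((↑) ∘ (√·) ∘ hA.1.eigenvalues) *
    (star hA.1.eigenvectorUnitary : Matrix n n ℂ)

lemma sqrt_eq_cfc_sqrt {n : Type*} [Fintype n] [DecidableEq n]
    {A : Matrix n n ℂ} (hA : A.PosSemidef) : hA.sqrt = CFC.sqrt A := by
  rw [CFC.sqrt_eq_real_sqrt A hA.nonneg, cfcₙ_eq_cfc, hA.1.cfc_eq, IsHermitian.cfc, Unitary.conjStarAlgAut_apply]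
  rfl

lemma posSemidef_sqrt {n : Type*} [Fintype n] [DecidableEq n]
    {A : Matrix n n ℂ} (hA : A.PosSemidef) : hA.sqrt.PosSemidef := by
  rw [sqrt_eq_cfc_sqrt]
  exact (CFC.sqrt_nonneg A).posSemidef

lemma sq_sqrt {n : Type*} [Fintype n] [DecidableEq n]
    {A : Matrix n n ℂ} (hA : A.PosSemidef) : hA.sqrt ^ 2 = A := by
  rw [sqrt_eq_cfc_sqrt]
  exact CFC.sq_sqrt A hA.nonneg

lemma eq_sqrt_of_sq_eq {n : Type*} [Fintype n] [DecidableEq n]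
    {A B : Matrix n n ℂ} (hB : B.PosSemidef) (hA : A.PosSemidef) (h : B ^ 2 = A) :
    B = hA.sqrt := by
  rw [sqrt_eq_cfc_sqrt]
  exact (CFC.sqrt_unique (by rw [← sq]; exact h) hB.nonneg).symm

end Matrix.PosSemidef

lemma kron_conjTranspose {m n : Type*} [Fintype m] [Fintype n]
    (A : Matrix m m ℂ) (B : Matrix n n ℂ) :
    (A ⊗ₖ B)ᴴ = Aᴴ ⊗ₖ Bᴴ := by
  ext ⟨i, j⟩ ⟨k, l⟩
  simp [conjTranspose_apply, kroneckerMap_apply, _root_.map_mul]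

lemma posSemidef_kron {m n : Type*} [Fintype m] [DecidableEq m]
    [Fintype n] [DecidableEq n]
    {A : Matrix m m ℂ} {B : Matrix n n ℂ}
    (hA : A.PosSemidef) (hB : B.PosSemidef) : (A ⊗ₖ B).PosSemidef := by
  exact hA.kronecker hB

lemma matSqrt_eq {n : Type*} [Fintype n] [DecidableEq n]
    {A : Matrix n n ℂ} (hA : A.PosSemidef) : matSqrt A = hA.sqrt := by
  rw [matSqrt, dif_pos hA]
  rfl

lemma matSqrt_kron {m n : Type*} [Fintype m] [DecidableEq m]
    [Fintype n] [DecidableEq n]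
    {A : Matrix m m ℂ} {B : Matrix n n ℂ}
    (hA : A.PosSemidef) (hB : B.PosSemidef) :
    matSqrt (A ⊗ₖ B) = matSqrt A ⊗ₖ matSqrt B := by
  rw [matSqrt_eq (posSemidef_kron hA hB), matSqrt_eq hA, matSqrt_eq hB]
  refine ((posSemidef_kron hA.posSemidef_sqrt hB.posSemidef_sqrt).eq_sqrt_of_sq_eq
    (posSemidef_kron hA hB) ?_).symm
  rw [pow_two, ← Matrix.mul_kronecker_mul, ← pow_two, ← pow_two,
    hA.sq_sqrt, hB.sq_sqrt]

lemma trace_im_zero {n : Type*} [Fintype n]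
    {A : Matrix n n ℂ} (hA : A.IsHermitian) : A.trace.im = 0 := by
  rw [Matrix.trace, Complex.im_sum]
  refine Finset.sum_eq_zero fun i _ => ?_
  simp only [Matrix.diag_apply]
  have := congrFun (congrFun hA.eq i) i
  have h2 : (A i i).im = -(A i i).im := by
    simpa [Matrix.conjTranspose_apply, Complex.ext_iff] using this.symm
  linarith

/-- Fidelity is multiplicative under tensor (Kronecker) products. -/
theorem fid_kronecker_mul {m n : Type*} [Fintype m] [DecidableEq m]
    [Fintype n] [DecidableEq n]
    (A A' : Matrix m m ℂ) (B B' : Matrix n n ℂ)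
    (hA : A.PosSemidef) (hA' : A'.PosSemidef)
    (hB : B.PosSemidef) (hB' : B'.PosSemidef) :
    fid (A ⊗ₖ B) (A' ⊗ₖ B') = fid A A' * fid B B' := by
  have hSA : (matSqrt A * A' * matSqrt A).PosSemidef := by
    rw [matSqrt_eq hA]
    have := hA'.mul_mul_conjTranspose_same hA.sqrt
    rwa [hA.posSemidef_sqrt.1.eq] at this
  have hSB : (matSqrt B * B' * matSqrt B).PosSemidef := by
    rw [matSqrt_eq hB]
    have := hB'.mul_mul_conjTranspose_same hB.sqrt
    rwa [hB.posSemidef_sqrt.1.eq] at this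
  have key : matSqrt (A ⊗ₖ B) * (A' ⊗ₖ B') * matSqrt (A ⊗ₖ B)
      = (matSqrt A * A' * matSqrt A) ⊗ₖ (matSqrt B * B' * matSqrt B) := by
    rw [matSqrt_kron hA hB, ← Matrix.mul_kronecker_mul, ← Matrix.mul_kronecker_mul]
  unfold fid
  rw [key, matSqrt_kron hSA hSB, Matrix.trace_kronecker, Complex.mul_re,
    trace_im_zero (matSqrt_eq hSA ▸ hSA.posSemidef_sqrt.1),
    trace_im_zero (matSqrt_eq hSB ▸ hSB.posSemidef_sqrt.1)]
  ring
end

section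
/- The Uhlmann fidelity between two Poisson states in the Poisson limit equals exp(−(N+N')/2 + F(Γ,Γ')): if ρ_M = ((1−N/M)τ₀ ⊕ (N/M)τ₁)^{⊗M} and ρ'_M = ((1−N'/M)τ₀ ⊕ (N'/M)τ₁')^{⊗M}, then lim_{M→∞} F(ρ_M, ρ'_M) = exp(−(N+N')/2 + √(N N') F(τ₁,τ₁')). -/
open Matrix Kronecker ComplexOrder Filter

/-- `M`-fold tensor power of a matrix, realized on the index set `Fin M → k`. -/
noncomputable def tpow {k : Type*} (τ : Matrix k k ℂ) (M : ℕ) :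
    Matrix (Fin M → k) (Fin M → k) ℂ :=
  Matrix.of fun i j => ∏ m, τ (i m) (j m)

/-- The single-temporal-mode rare state `(1 − N/M) τ₀ ⊕ (N/M) τ₁`, where `τ₀` is the
unique density operator on a 1-dimensional space. -/
noncomputable def rareState {d : ℕ} (N : ℝ) (τ₁ : Matrix (Fin d) (Fin d) ℂ) (M : ℕ) :
    Matrix (Unit ⊕ Fin d) (Unit ⊕ Fin d) ℂ :=
  Matrix.fromBlocks (((1 - N / M : ℝ) : ℂ) • 1) 0 0 (((N / M : ℝ) : ℂ) • τ₁)

section Aux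
set_option linter.unusedSectionVars false

variable {n : Type*} [Fintype n] [DecidableEq n]

open scoped MatrixOrder in
lemma matSqrt_eq_sqrt {A : Matrix n n ℂ} (hA : A.PosSemidef) : matSqrt A = CFC.sqrt A := by
  rw [matSqrt, dif_pos hA, CFC.sqrt_eq_cfc, cfc_nnreal_eq_real _ A, hA.1.cfc_eq]
  simp only [IsHermitian.cfc, Unitary.conjStarAlgAut_apply]
  congr 3
  funext x
  simp only [Function.comp_apply]
  rw [Real.sqrt.eq_1]
  rfl

open scoped MatrixOrder in
lemma matSqrt_eq_s3 {A S : Matrix n n ℂ} (hS : S.PosSemidef) (h : S * S = A) :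
    matSqrt A = S := by
  have hA : A.PosSemidef := by
    have : Sᴴ * S = A := by rw [hS.1.eq, h]
    exact this ▸ Matrix.posSemidef_conjTranspose_mul_self S
  rw [matSqrt_eq_sqrt hA]
  exact CFC.sqrt_unique h hS.nonneg

open scoped MatrixOrder in
lemma matSqrt_posSemidef (A : Matrix n n ℂ) : (matSqrt A).PosSemidef := by
  by_cases hA : A.PosSemidef
  · rw [matSqrt_eq_sqrt hA]
    exact (CFC.sqrt_nonneg A).posSemidef
  · rw [matSqrt, dif_neg hA]
    exact Matrix.PosSemidef.zero

open scoped MatrixOrder in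
lemma matSqrt_mul_self {A : Matrix n n ℂ} (hA : A.PosSemidef) :
    matSqrt A * matSqrt A = A := by
  rw [matSqrt_eq_sqrt hA]
  exact CFC.sqrt_mul_sqrt_self A hA.nonneg

lemma trace_re_of_psd {A : Matrix n n ℂ} (hA : A.PosSemidef) :
    A.trace = (A.trace.re : ℂ) ∧ 0 ≤ A.trace.re := by
  have h : ∀ i, 0 ≤ A i i := by
    intro i
    exact hA.diag_nonneg
  have him : ∀ i, (A i i).im = 0 := fun i => ((Complex.le_def.mp (h i)).2).symm
  have hre : ∀ i, 0 ≤ (A i i).re := fun i => (Complex.le_def.mp (h i)).1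
  have ht : A.trace = ∑ i, A i i := rfl
  refine ⟨?_, ?_⟩
  · rw [Complex.ext_iff]
    simp [ht, Complex.im_sum, him]
  · rw [ht, Complex.re_sum]
    exact Finset.sum_nonneg fun i _ => hre i

lemma fid_nonneg (A B : Matrix n n ℂ) : 0 ≤ fid A B :=
  (trace_re_of_psd (matSqrt_posSemidef _)).2

lemma psd_real_smul {A : Matrix n n ℂ} (hA : A.PosSemidef) {c : ℝ} (hc : 0 ≤ c) :
    ((c : ℂ) • A).PosSemidef := by
  constructor
  · unfold Matrix.IsHermitian
    rw [conjTranspose_smul, hA.1.eq]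
    simp
  · intro x
    exact (hA.smul (by exact_mod_cast hc : (0 : ℂ) ≤ (c : ℂ))).2 x

lemma matSqrt_real_smul {A : Matrix n n ℂ} (hA : A.PosSemidef) {c : ℝ} (hc : 0 ≤ c) :
    matSqrt ((c : ℂ) • A) = ((Real.sqrt c : ℂ)) • matSqrt A := by
  refine matSqrt_eq_s3 (psd_real_smul (matSqrt_posSemidef A) (Real.sqrt_nonneg c)) ?_
  rw [smul_mul_smul_comm, matSqrt_mul_self hA, ← Complex.ofReal_mul,
    Real.mul_self_sqrt hc]

lemma trace_real_smul (c : ℝ) (A : Matrix n n ℂ) :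
    (((c : ℂ) • A).trace).re = c * A.trace.re := by
  rw [Matrix.trace_smul]
  simp

lemma psd_sandwich {B : Matrix n n ℂ} (hB : B.PosSemidef) (A : Matrix n n ℂ) :
    (matSqrt A * B * matSqrt A).PosSemidef := by
  have := hB.mul_mul_conjTranspose_same (matSqrt A)
  rwa [(matSqrt_posSemidef A).1.eq] at this

/-- fidelity of nonnegative real multiples -/
lemma fid_smul {A B : Matrix n n ℂ} (hA : A.PosSemidef) (hB : B.PosSemidef)
    {c c' : ℝ} (hc : 0 ≤ c) (hc' : 0 ≤ c') :
    fid ((c : ℂ) • A) ((c' : ℂ) • B) = Real.sqrt (c * c') * fid A B := by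
  rw [fid, matSqrt_real_smul hA hc]
  have h1 : (Real.sqrt c : ℂ) • matSqrt A * ((c' : ℂ) • B) * ((Real.sqrt c : ℂ) • matSqrt A)
      = ((c * c' : ℝ) : ℂ) • (matSqrt A * B * matSqrt A) := by
    rw [smul_mul_smul_comm, smul_mul_smul_comm]
    congr 1
    rw [mul_right_comm]
    norm_cast
    rw [Real.mul_self_sqrt hc]
  rw [h1, matSqrt_real_smul (psd_sandwich hB A) (mul_nonneg hc hc'), trace_real_smul, fid]

section Blocks

variable {m : Type*} [Fintype m] [DecidableEq m]

lemma psd_fromBlocks {A : Matrix n n ℂ} {B : Matrix m m ℂ}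
    (hA : A.PosSemidef) (hB : B.PosSemidef) :
    (Matrix.fromBlocks A 0 0 B).PosSemidef := by
  have h : Matrix.fromBlocks A 0 0 B
      = (Matrix.fromBlocks (matSqrt A) 0 0 (matSqrt B))ᴴ
        * (Matrix.fromBlocks (matSqrt A) 0 0 (matSqrt B)) := by
    rw [fromBlocks_conjTranspose, fromBlocks_multiply]
    simp [(matSqrt_posSemidef A).1.eq, (matSqrt_posSemidef B).1.eq,
      matSqrt_mul_self hA, matSqrt_mul_self hB]
  rw [h]
  exact Matrix.posSemidef_conjTranspose_mul_self _

lemma matSqrt_fromBlocks {A : Matrix n n ℂ} {B : Matrix m m ℂ}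
    (hA : A.PosSemidef) (hB : B.PosSemidef) :
    matSqrt (Matrix.fromBlocks A 0 0 B)
      = Matrix.fromBlocks (matSqrt A) 0 0 (matSqrt B) := by
  refine matSqrt_eq_s3 (psd_fromBlocks (matSqrt_posSemidef A) (matSqrt_posSemidef B)) ?_
  rw [fromBlocks_multiply]
  simp [matSqrt_mul_self hA, matSqrt_mul_self hB]

lemma trace_fromBlocks (A : Matrix n n ℂ) (B : Matrix m m ℂ) :
    (Matrix.fromBlocks A 0 0 B).trace = A.trace + B.trace := by
  simp [Matrix.trace, Matrix.diag, Fintype.sum_sum_type, Matrix.fromBlocks]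

lemma fid_fromBlocks {A A' : Matrix n n ℂ} {B B' : Matrix m m ℂ}
    (hA : A.PosSemidef) (hA' : A'.PosSemidef) (hB : B.PosSemidef) (hB' : B'.PosSemidef) :
    fid (Matrix.fromBlocks A 0 0 B) (Matrix.fromBlocks A' 0 0 B')
      = fid A A' + fid B B' := by
  rw [fid, matSqrt_fromBlocks hA hB, fromBlocks_multiply, fromBlocks_multiply]
  simp only [Matrix.mul_zero, Matrix.zero_mul, add_zero, zero_add]
  rw [matSqrt_fromBlocks (psd_sandwich hA' A) (psd_sandwich hB' B), trace_fromBlocks,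
    Complex.add_re, fid, fid]

lemma fid_one_unit : fid (1 : Matrix Unit Unit ℂ) 1 = 1 := by
  have h1 : matSqrt (1 : Matrix Unit Unit ℂ) = 1 :=
    matSqrt_eq_s3 Matrix.PosSemidef.one (one_mul 1)
  rw [fid, h1, one_mul, mul_one, h1]
  simp [Matrix.trace]

end Blocks

section Tpow

variable {k : Type*} [Fintype k] [DecidableEq k]

lemma tpow_mul (A B : Matrix k k ℂ) (M : ℕ) :
    tpow A M * tpow B M = tpow (A * B) M := by
  ext i l
  simp only [tpow, Matrix.mul_apply, Matrix.of_apply]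
  simp_rw [← Finset.prod_mul_distrib]
  have := Finset.sum_prod_piFinset (Finset.univ : Finset k)
    (fun (m : Fin M) (x : k) => A (i m) x * B x (l m))
  rw [Fintype.piFinset_univ] at this
  exact this

lemma tpow_conjTranspose (A : Matrix k k ℂ) (M : ℕ) :
    (tpow A M)ᴴ = tpow Aᴴ M := by
  ext i j
  simp [tpow, Matrix.conjTranspose_apply, star_prod]

open scoped MatrixOrder in
lemma tpow_psd {A : Matrix k k ℂ} (hA : A.PosSemidef) (M : ℕ) :
    (tpow A M).PosSemidef := by
  obtain ⟨B, hB⟩ := CStarAlgebra.nonneg_iff_eq_star_mul_self.mp (Matrix.PosSemidef.nonneg hA)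
  rw [star_eq_conjTranspose] at hB
  rw [hB, ← tpow_mul, ← tpow_conjTranspose]
  exact Matrix.posSemidef_conjTranspose_mul_self _

lemma matSqrt_tpow {A : Matrix k k ℂ} (hA : A.PosSemidef) (M : ℕ) :
    matSqrt (tpow A M) = tpow (matSqrt A) M :=
  matSqrt_eq_s3 (tpow_psd (matSqrt_posSemidef A) M)
    (by rw [tpow_mul, matSqrt_mul_self hA])

lemma tpow_trace (A : Matrix k k ℂ) (M : ℕ) :
    (tpow A M).trace = A.trace ^ M := by
  simp only [Matrix.trace, Matrix.diag, tpow, Matrix.of_apply]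
  have := Finset.sum_prod_piFinset (Finset.univ : Finset k)
    (fun (_ : Fin M) (x : k) => A x x)
  rw [Fintype.piFinset_univ] at this
  rw [this, Finset.prod_const, Finset.card_univ, Fintype.card_fin]

lemma fid_tpow {A B : Matrix k k ℂ} (hA : A.PosSemidef) (hB : B.PosSemidef) (M : ℕ) :
    fid (tpow A M) (tpow B M) = fid A B ^ M := by
  rw [fid, matSqrt_tpow hA, tpow_mul, tpow_mul, matSqrt_tpow (psd_sandwich hB A),
    tpow_trace]
  obtain ⟨h1, _⟩ := trace_re_of_psd (matSqrt_posSemidef (matSqrt A * B * matSqrt A))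
  conv_lhs => rw [h1]
  rw [← Complex.ofReal_pow, Complex.ofReal_re, fid]

end Tpow

end Aux

lemma tendsto_one_add_pow_exp {L : ℝ} {b : ℕ → ℝ}
    (hb : Filter.Tendsto (fun M : ℕ => (M : ℝ) * b M) Filter.atTop (nhds L)) :
    Filter.Tendsto (fun M : ℕ => (1 + b M) ^ M) Filter.atTop (nhds (Real.exp L)) := by
  have hb0 : Filter.Tendsto b Filter.atTop (nhds 0) := by
    have h := hb.mul tendsto_inv_atTop_nhds_zero_nat
    rw [mul_zero] at h
    apply h.congr'
    filter_upwards [eventually_ge_atTop 1] with M hM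
    have : (M : ℝ) ≠ 0 := by positivity
    field_simp
  have hpos : ∀ᶠ M : ℕ in atTop, 0 < 1 + b M := by
    filter_upwards [hb0.eventually (eventually_gt_nhds (show (-1 : ℝ) < 0 by norm_num))]
      with M hM
    linarith
  have hinv : Filter.Tendsto (fun M : ℕ => (1 + b M)⁻¹) Filter.atTop (nhds 1) := by
    have h1 : Filter.Tendsto (fun M : ℕ => 1 + b M) Filter.atTop (nhds 1) := by
      simpa using hb0.const_add 1
    simpa using h1.inv₀ one_ne_zero
  have hlow : Filter.Tendsto (fun M : ℕ => (M : ℝ) * b M * (1 + b M)⁻¹)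
      Filter.atTop (nhds L) := by simpa using hb.mul hinv
  have hlog : Filter.Tendsto (fun M : ℕ => (M : ℝ) * Real.log (1 + b M))
      Filter.atTop (nhds L) := by
    refine tendsto_of_tendsto_of_tendsto_of_le_of_le' hlow hb ?_ ?_
    · filter_upwards [hpos] with M hM
      have h1 : b M * (1 + b M)⁻¹ ≤ Real.log (1 + b M) := by
        have := Real.one_sub_inv_le_log_of_pos hM
        have he : 1 - (1 + b M)⁻¹ = b M * (1 + b M)⁻¹ := by
          field_simp
          ring
        linarith [he ▸ this]
      rw [mul_assoc]
      exact mul_le_mul_of_nonneg_left h1 (Nat.cast_nonneg M)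
    · filter_upwards [hpos] with M hM
      have h1 : Real.log (1 + b M) ≤ b M := by
        have := Real.log_le_sub_one_of_pos hM
        linarith
      exact mul_le_mul_of_nonneg_left h1 (Nat.cast_nonneg M)
  have hexp := (Real.continuous_exp.tendsto L).comp hlog
  apply hexp.congr'
  filter_upwards [hpos] with M hM
  simp only [Function.comp_apply]
  rw [Real.exp_nat_mul, Real.exp_log hM]

/-- The Uhlmann fidelity between two Poisson states in the Poisson limit equals
`exp(−(N+N')/2 + F(Γ,Γ'))` with `F(Γ,Γ') = √(N N') F(τ₁,τ₁')`. -/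
theorem poisson_states_fidelity {d : ℕ} (τ₁ τ₁' : Matrix (Fin d) (Fin d) ℂ)
    (hτ₁ : τ₁.PosSemidef) (hτ₁tr : τ₁.trace = 1)
    (hτ₁' : τ₁'.PosSemidef) (hτ₁'tr : τ₁'.trace = 1)
    (N N' : ℝ) (hN : 0 < N) (hN' : 0 < N') :
    Filter.Tendsto
      (fun M : ℕ => fid (tpow (rareState N τ₁ M) M) (tpow (rareState N' τ₁' M) M))
      Filter.atTop
      (nhds (Real.exp (-(N + N') / 2 + Real.sqrt (N * N') * fid τ₁ τ₁'))) := by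
  set F := fid τ₁ τ₁' with hFdef
  have hF0 : 0 ≤ F := fid_nonneg _ _
  set b : ℕ → ℝ := fun M =>
    Real.sqrt ((1 - N / M) * (1 - N' / M)) + Real.sqrt (N * N') * F / M - 1 with hbdef
  -- the common eventual hypotheses
  have hev : ∀ᶠ M : ℕ in atTop, 1 ≤ M ∧ N ≤ (M : ℝ) ∧ N' ≤ (M : ℝ) := by
    filter_upwards [eventually_ge_atTop 1,
      tendsto_natCast_atTop_atTop.eventually_ge_atTop N,
      tendsto_natCast_atTop_atTop.eventually_ge_atTop N'] with M h1 h2 h3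
    exact ⟨h1, h2, h3⟩
  -- Step 1 : tendsto of M * b M
  have hMb : Filter.Tendsto (fun M : ℕ => (M : ℝ) * b M) Filter.atTop
      (nhds (-(N + N') / 2 + Real.sqrt (N * N') * F)) := by
    have hu : Filter.Tendsto (fun M : ℕ => N / (M : ℝ)) Filter.atTop (nhds 0) :=
      tendsto_const_div_atTop_nhds_zero_nat N
    have hu' : Filter.Tendsto (fun M : ℕ => N' / (M : ℝ)) Filter.atTop (nhds 0) :=
      tendsto_const_div_atTop_nhds_zero_nat N'
    have hprod : Filter.Tendsto (fun M : ℕ => (1 - N / M) * (1 - N' / M))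
        Filter.atTop (nhds 1) := by
      have := ((hu.const_sub 1).mul (hu'.const_sub 1))
      simpa using this
    have hs : Filter.Tendsto (fun M : ℕ => Real.sqrt ((1 - N / M) * (1 - N' / M)))
        Filter.atTop (nhds 1) := by
      have := (Real.continuous_sqrt.tendsto 1).comp hprod
      simpa [Function.comp_def] using this
    have hden : Filter.Tendsto
        (fun M : ℕ => Real.sqrt ((1 - N / M) * (1 - N' / M)) + 1)
        Filter.atTop (nhds 2) := by
      have := hs.add (tendsto_const_nhds (x := (1:ℝ)) (f := (atTop : Filter ℕ)))
      norm_num at this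
      exact this
    have hnum : Filter.Tendsto (fun M : ℕ => -N - N' + N * N' / M)
        Filter.atTop (nhds (-N - N')) := by
      have := (tendsto_const_nhds (x := -N - N') (f := (atTop : Filter ℕ))).add
        (tendsto_const_div_atTop_nhds_zero_nat (N * N'))
      simpa using this
    have ht : Filter.Tendsto (fun M : ℕ =>
        (-N - N' + N * N' / M) / (Real.sqrt ((1 - N / M) * (1 - N' / M)) + 1)
          + Real.sqrt (N * N') * F)
        Filter.atTop (nhds ((-N - N') / 2 + Real.sqrt (N * N') * F)) :=
      (hnum.div hden two_ne_zero).add tendsto_const_nhds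
    have hval : (-N - N') / 2 + Real.sqrt (N * N') * F
        = -(N + N') / 2 + Real.sqrt (N * N') * F := by ring
    rw [hval] at ht
    apply ht.congr'
    filter_upwards [hev] with M ⟨hM1, hMN, hMN'⟩
    have hMpos : (0 : ℝ) < M := by exact_mod_cast hM1
    have hM0 : (M : ℝ) ≠ 0 := ne_of_gt hMpos
    have hα : 0 ≤ 1 - N / M := by
      rw [sub_nonneg]
      exact (div_le_one hMpos).mpr hMN
    have hα' : 0 ≤ 1 - N' / M := by
      rw [sub_nonneg]
      exact (div_le_one hMpos).mpr hMN'
    set s := Real.sqrt ((1 - N / M) * (1 - N' / M)) with hsdef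
    have hs0 : 0 ≤ s := Real.sqrt_nonneg _
    have hsq : s * s = (1 - N / M) * (1 - N' / M) :=
      Real.mul_self_sqrt (mul_nonneg hα hα')
    have hs1 : s + 1 ≠ 0 := by positivity
    have key : (M : ℝ) * (s - 1) = (-N - N' + N * N' / M) / (s + 1) := by
      rw [eq_div_iff hs1]
      have expand : ((M : ℝ) * (s - 1)) * (s + 1) = M * (s * s - 1) := by ring
      rw [expand, hsq]
      field_simp
      ring
    have : (M : ℝ) * b M = (M : ℝ) * (s - 1) + Real.sqrt (N * N') * F := by
      rw [hbdef]
      simp only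
      rw [← hsdef]
      field_simp
      ring
    rw [key] at this
    exact this.symm
  -- Step 2 : eventual equality of the fidelity with (1 + b M) ^ M
  have hmain := tendsto_one_add_pow_exp hMb
  apply hmain.congr'
  filter_upwards [hev] with M ⟨hM1, hMN, hMN'⟩
  have hMpos : (0 : ℝ) < M := by exact_mod_cast hM1
  have hM0 : (M : ℝ) ≠ 0 := ne_of_gt hMpos
  have hα : (0 : ℝ) ≤ 1 - N / M := by
    rw [sub_nonneg]; exact (div_le_one hMpos).mpr hMN
  have hα' : (0 : ℝ) ≤ 1 - N' / M := by
    rw [sub_nonneg]; exact (div_le_one hMpos).mpr hMN'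
  have hc : (0 : ℝ) ≤ N / M := by positivity
  have hc' : (0 : ℝ) ≤ N' / M := by positivity
  have psdA : ((((1 - N / M : ℝ)) : ℂ) • (1 : Matrix Unit Unit ℂ)).PosSemidef :=
    psd_real_smul Matrix.PosSemidef.one hα
  have psdA' : ((((1 - N' / M : ℝ)) : ℂ) • (1 : Matrix Unit Unit ℂ)).PosSemidef :=
    psd_real_smul Matrix.PosSemidef.one hα'
  have psdB : (((N / M : ℝ) : ℂ) • τ₁).PosSemidef := psd_real_smul hτ₁ hc
  have psdB' : (((N' / M : ℝ) : ℂ) • τ₁').PosSemidef := psd_real_smul hτ₁' hc'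
  have hρ : (rareState N τ₁ M).PosSemidef := psd_fromBlocks psdA psdB
  have hρ' : (rareState N' τ₁' M).PosSemidef := psd_fromBlocks psdA' psdB'
  have step1 : fid (tpow (rareState N τ₁ M) M) (tpow (rareState N' τ₁' M) M)
      = fid (rareState N τ₁ M) (rareState N' τ₁' M) ^ M := fid_tpow hρ hρ' M
  have step2 : fid (rareState N τ₁ M) (rareState N' τ₁' M)
      = Real.sqrt ((1 - N / M) * (1 - N' / M)) * fid (1 : Matrix Unit Unit ℂ) 1
        + Real.sqrt ((N / M) * (N' / M)) * F := by
    rw [rareState, rareState, fid_fromBlocks psdA psdA' psdB psdB',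
      fid_smul Matrix.PosSemidef.one Matrix.PosSemidef.one hα hα',
      fid_smul hτ₁ hτ₁' hc hc']
  have hsqrt : Real.sqrt ((N / M) * (N' / M)) = Real.sqrt (N * N') / M := by
    have h1 : (N / M) * (N' / M) = (N * N') / (M * M) := by ring
    rw [h1, Real.sqrt_div (by positivity), Real.sqrt_mul_self (le_of_lt hMpos)]
  rw [step1, step2, fid_one_unit, hsqrt]
  congr 1
  rw [hbdef]
  simp only
  ring
end

section
/- Decomposition of the Helstrom (SLD quantum Fisher) information of an unnormalized state: let Γ(θ) = N(θ)τ(θ) where N(θ) > 0 is smooth and τ(θ) is a smooth family of positive definite density operators; let S be the Hermitian solution of ∂Γ/∂θ = (SΓ + ΓS)/2 and L the Hermitian solution of ∂τ/∂θ = (Lτ + τL)/2. Then tr(S²Γ) = (N'(θ))²/N(θ) + N(θ) tr(L²τ). -/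
open Matrix ComplexOrder

/-- Decomposition of the Helstrom (SLD quantum Fisher) information of an unnormalized state
`Γ(θ) = N(θ) τ(θ)`: `tr(S²Γ) = N'(θ)²/N(θ) + N(θ) tr(L²τ)`, where `S` and `L` are the
symmetric logarithmic derivatives of `Γ` and `τ` at `θ`, respectively. -/
theorem helstrom_decomp {n : Type*} [Fintype n] [DecidableEq n]
    (τ : ℝ → Matrix n n ℂ) (N : ℝ → ℝ) (θ : ℝ)
    (hτpos : ∀ t, (τ t).PosDef) (hτtr : ∀ t, (τ t).trace = 1) (hNpos : ∀ t, 0 < N t)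
    (dτ : Matrix n n ℂ) (dN : ℝ)
    (hdτ : ∀ i j, HasDerivAt (fun t => τ t i j) (dτ i j) θ)
    (hdN : HasDerivAt N dN θ)
    (S L : Matrix n n ℂ) (hS : S.IsHermitian) (hL : L.IsHermitian)
    (hSeq : (dN : ℂ) • τ θ + (N θ : ℂ) • dτ
      = (2 : ℂ)⁻¹ • (S * ((N θ : ℂ) • τ θ) + ((N θ : ℂ) • τ θ) * S))
    (hLeq : dτ = (2 : ℂ)⁻¹ • (L * τ θ + τ θ * L)) :
    (S * S * ((N θ : ℂ) • τ θ)).trace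
      = ((dN ^ 2 / N θ : ℝ) : ℂ) + (N θ : ℂ) * (L * L * τ θ).trace := by
  have hN0 : (N θ : ℂ) ≠ 0 := by exact_mod_cast (hNpos θ).ne'
  -- derivative of the (constant) trace is zero
  have htrdτ : dτ.trace = 0 := by
    have h1 : HasDerivAt (fun t => (τ t).trace) dτ.trace θ := by
      simp only [Matrix.trace, Matrix.diag]
      exact HasDerivAt.fun_sum fun i _ => hdτ i i
    have h2 : HasDerivAt (fun t => (τ t).trace) 0 θ := by
      have he : (fun t => (τ t).trace) = fun _ => (1 : ℂ) := funext fun t => hτtr t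
      rw [he]; exact hasDerivAt_const _ _
    exact h1.unique h2
  -- tr(Lτ) = 0
  have htrLτ : (L * τ θ).trace = 0 := by
    have h := congrArg Matrix.trace hLeq
    rw [htrdτ] at h
    simp only [Matrix.trace_smul, Matrix.trace_add, Matrix.trace_mul_comm (τ θ) L,
      smul_eq_mul] at h
    linear_combination -h
  -- tr(Sτ) = dN / N
  have htrSτ : (N θ : ℂ) * (S * τ θ).trace = (dN : ℂ) := by
    have h := congrArg Matrix.trace hSeq
    simp only [Matrix.trace_smul, Matrix.trace_add, smul_eq_mul, mul_smul_comm,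
      Matrix.smul_mul, htrdτ, hτtr θ, Matrix.trace_mul_comm (τ θ) S] at h
    linear_combination -h
  -- trace hSeq against S : tr(S²Γ) = dN tr(Sτ) + N tr(S dτ)
  have e1 : (dN : ℂ) * (S * τ θ).trace + (N θ : ℂ) * (S * dτ).trace
      = (S * S * ((N θ : ℂ) • τ θ)).trace := by
    have h := congrArg (fun M => (S * M).trace) hSeq
    simp only [mul_add, mul_smul_comm, Matrix.smul_mul, Matrix.trace_add, Matrix.trace_smul,
      smul_eq_mul, ← mul_assoc] at h
    rw [Matrix.trace_mul_comm (S * τ θ) S, ← mul_assoc] at h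
    rw [Matrix.mul_smul, Matrix.trace_smul, smul_eq_mul]
    linear_combination h
  -- trace hLeq against S
  have e3 : (S * dτ).trace = (2 : ℂ)⁻¹ * ((S * L * τ θ).trace + (L * S * τ θ).trace) := by
    have h := congrArg (fun M => (S * M).trace) hLeq
    simp only [mul_add, mul_smul_comm, Matrix.trace_add, Matrix.trace_smul, smul_eq_mul,
      ← mul_assoc] at h
    rw [Matrix.trace_mul_comm (S * τ θ) L, ← mul_assoc] at h
    linear_combination h
  -- trace hSeq against L
  have e2 : (dN : ℂ) * (L * τ θ).trace + (N θ : ℂ) * (L * dτ).trace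
      = (2 : ℂ)⁻¹ * (N θ : ℂ) * ((L * S * τ θ).trace + (S * L * τ θ).trace) := by
    have h := congrArg (fun M => (L * M).trace) hSeq
    simp only [mul_add, mul_smul_comm, Matrix.smul_mul, Matrix.trace_add, Matrix.trace_smul,
      smul_eq_mul, ← mul_assoc] at h
    rw [Matrix.trace_mul_comm (L * τ θ) S, ← mul_assoc] at h
    linear_combination h
  -- trace hLeq against L : tr(L dτ) = tr(L²τ)
  have e4 : (L * dτ).trace = (L * L * τ θ).trace := by
    have h := congrArg (fun M => (L * M).trace) hLeq
    simp only [mul_add, mul_smul_comm, Matrix.trace_add, Matrix.trace_smul, smul_eq_mul,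
      ← mul_assoc] at h
    rw [Matrix.trace_mul_comm (L * τ θ) L, ← mul_assoc] at h
    linear_combination h
  -- tr(S dτ) = tr(L²τ)
  have hx : (S * dτ).trace = (L * L * τ θ).trace := by
    rw [htrLτ, e4] at e2
    apply mul_left_cancel₀ hN0
    rw [e3]
    linear_combination -e2
  -- tr(Sτ) = dN/N
  have ha : (S * τ θ).trace = (dN : ℂ) / (N θ : ℂ) := by
    field_simp
    linear_combination htrSτ
  rw [← e1, ha, hx]
  push_cast
  field_simp
end
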